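/- Let G be a graph on n vertices such that deg(u) + deg(v) ≥ (4n − 1)/3 for every pair of distinct non-adjacent vertices u, v, and suppose the minimum degree satisfies δ(G) ≤ n/3 + 2. Then G contains the square of a Hamiltonian path, i.e., an ordering v₁, …, v_n of all n vertices such that v_i is adjacent to v_j whenever 1 ≤ |i − j| ≤ 2. -/

import Mathlib

namespace Stmt15Aux

variable {V : Type} {R : V → V → Prop}

inductive Sq (R : V → V → Prop) : List V → Prop where
  | nil : Sq R []
  | single (a : V) : Sq R [a]
  | pair {a b : V} : R a b → Sq R [a, b]
  | cons {a b c : V} {l : List V} : R a b → R a c → Sq R (b :: c :: l) →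
      Sq R (a :: b :: c :: l)

lemma Sq.cons1 {a : V} {l : List V} (h : Sq R l)
    (ha : ∀ y ∈ l.take 2, R a y) : Sq R (a :: l) := by
  match l, h with
  | [], _ => exact Sq.single a
  | [b], _ => exact Sq.pair (ha b (by simp))
  | b :: c :: l, h =>
    exact Sq.cons (ha b (by simp)) (ha c (by simp)) h

lemma Sq.append {l1 l2 : List V} (h1 : Sq R l1) (h2 : Sq R l2)
    (hc : ∀ x ∈ l1.reverse.take 2, ∀ y ∈ l2.take 2, R x y) :
    Sq R (l1 ++ l2) := by
  induction h1 with
  | nil => simpa using h2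
  | single a =>
    exact h2.cons1 (fun y hy => hc a (by simp) y hy)
  | @pair a b hab =>
    match l2, h2 with
    | [], _ => exact Sq.pair hab
    | [y], _ =>
      exact Sq.cons hab (hc a (by simp) y (by simp))
        (Sq.pair (hc b (by simp) y (by simp)))
    | y :: z :: l, h2 =>
      exact Sq.cons hab (hc a (by simp) y (by simp))
        (Sq.cons (hc b (by simp) y (by simp)) (hc b (by simp) z (by simp)) h2)
  | @cons a b c l hab hac htail ih =>
    have hrev : (b :: c :: l).reverse.take 2 = (a :: b :: c :: l).reverse.take 2 := by
      have : (a :: b :: c :: l).reverse = (b :: c :: l).reverse ++ [a] := by simp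
      rw [this, List.take_append_of_le_length (by simp)]
    have := ih (fun x hx => hc x (by rw [← hrev] at *; exact hrev ▸ hx))
    exact Sq.cons hab hac this

lemma sq_of_pairwise {l : List V} (h : l.Pairwise R) : Sq R l := by
  induction l with
  | nil => exact Sq.nil
  | cons a l ih =>
    have htail := ih (List.Pairwise.sublist (by simp) h)
    refine htail.cons1 (fun y hy => ?_)
    have hy' : y ∈ l := List.take_subset _ _ hy
    exact (List.pairwise_cons.mp h).1 y hy'

lemma Sq.get {L : List V} (h : Sq R L) :
    ∀ (i j : ℕ) (hj : j < L.length) (hij : j = i + 1 ∨ j = i + 2),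
      R (L.get ⟨i, by omega⟩) (L.get ⟨j, hj⟩) := by
  induction h with
  | nil => intro i j hj _; simp at hj
  | single a => intro i j hj hij; simp at hj; omega
  | @pair a b hab =>
    intro i j hj hij
    simp at hj
    have : i = 0 ∧ j = 1 := by omega
    obtain ⟨rfl, rfl⟩ := this
    simpa using hab
  | @cons a b c l hab hac htail ih =>
    intro i j hj hij
    match i, j, hij with
    | 0, 1, _ => simpa using hab
    | 0, 2, _ => simpa using hac
    | (i+1), (j+1), hij =>
      have hj' : j < (b :: c :: l).length := by simp at hj ⊢; omega
      have := ih i j hj' (by omega)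
      simpa using this




def mk : List (List V) → List V → List V
  | [], as => as
  | bl :: bls, [] => bl ++ mk bls []
  | bl :: bls, [a] => a :: (bl ++ mk bls [])
  | bl :: bls, a1 :: a2 :: as => a1 :: a2 :: (bl ++ mk bls as)

lemma mk_perm (bls : List (List V)) (as : List V) :
    (mk bls as).Perm (bls.flatten ++ as) := by
  induction bls, as using mk.induct with
  | case1 as => simp [mk]
  | case2 bl bls ih =>
    simpa [mk] using ih.append_left bl
  | case3 bl bls a ih =>
    simp only [mk, List.flatten_cons, List.append_nil] at *
    refine ((ih.append_left bl).cons a).trans ?_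
    exact (List.perm_append_singleton a (bl ++ bls.flatten)).symm
  | case4 bl bls a1 a2 as ih =>
    simp only [mk, List.flatten_cons] at *
    refine (((ih.append_left bl).cons a2).cons a1).trans ?_
    have h2 := List.perm_middle (a := a1) (l₁ := bl ++ bls.flatten) (l₂ := a2 :: as)
    have h3 := List.perm_middle (a := a2) (l₁ := bl ++ bls.flatten) (l₂ := as)
    have h4 := ((h3.symm).cons a1).trans h2.symm
    rw [List.append_assoc] at h4
    exact h4

lemma mem_mk {x : V} {bls : List (List V)} {as : List V} :
    x ∈ mk bls as ↔ x ∈ bls.flatten ∨ x ∈ as := by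
  rw [(mk_perm bls as).mem_iff, List.mem_append]

lemma mk_take2 {bls : List (List V)} {as : List V}
    (h : 2 * bls.length ≤ as.length) :
    ∀ x ∈ (mk bls as).take 2, x ∈ as := by
  match bls, as with
  | [], as => intro x hx; exact List.take_subset _ _ hx
  | bl :: bls, [] => simp at h
  | bl :: bls, [a] => simp at h; omega
  | bl :: bls, a1 :: a2 :: as =>
    intro x hx
    simp [mk] at hx
    rcases hx with rfl | rfl <;> simp


lemma mk_sq (hsym : Symmetric R) :
    ∀ (bls : List (List V)) (as : List V),
      2 * bls.length ≤ as.length →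
      (∀ bl ∈ bls, Sq R bl) →
      as.Nodup →
      (∀ b ∈ bls.flatten, b ∉ as) →
      (∀ a ∈ as, ∀ b, (b ∈ bls.flatten ∨ b ∈ as) → b ≠ a → R a b) →
      Sq R (mk bls as) := by
  intro bls as
  induction bls, as using mk.induct with
  | case1 as =>
    intro _ _ hnd _ hax
    refine sq_of_pairwise (List.Pairwise.imp_of_mem ?_ hnd)
    intro a b ha hb hne
    exact hax a ha b (Or.inr hb) (Ne.symm hne)
  | case2 bl bls ih => intro h1; simp at h1
  | case3 bl bls a ih => intro h1; simp at h1; omega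
  | case4 bl bls a1 a2 as ih =>
    intro h1 h2 h4 h5 h6
    have hlen' : 2 * bls.length ≤ as.length := by simp at h1; omega
    have hnd' : as.Nodup := ((List.nodup_cons.mp ((List.nodup_cons.mp h4).2)).2)
    have ha1 : a1 ∈ (a1 :: a2 :: as) := by simp
    have ha2 : a2 ∈ (a1 :: a2 :: as) := by simp
    have hsubf : ∀ b, b ∈ bls.flatten → b ∈ (bl :: bls).flatten := by
      intro b hb; simp [List.mem_flatten] at hb ⊢
      rcases hb with ⟨l, hl, hbl⟩; exact Or.inr ⟨l, hl, hbl⟩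
    have hsuba : ∀ y, y ∈ as → y ∈ (a1 :: a2 :: as) := by intro y hy; simp [hy]
    have ihh : Sq R (mk bls as) := by
      refine ih hlen' (fun b hb => h2 b (by simp [hb])) hnd' ?_ ?_
      · intro b hb hbas
        exact h5 b (hsubf b hb) (hsuba b hbas)
      · intro a ha b hb hne
        refine h6 a (hsuba a ha) b ?_ hne
        rcases hb with hb | hb
        · exact Or.inl (hsubf b hb)
        · exact Or.inr (hsuba b hb)
    have hblf : ∀ x, x ∈ bl → x ∈ (bl :: bls).flatten := by
      intro x hx; simp [List.mem_flatten]; exact Or.inl hx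
    have hinner : Sq R (bl ++ mk bls as) := by
      refine Sq.append (h2 bl (by simp)) ihh ?_
      intro x hx y hy
      have hx' : x ∈ bl := List.mem_reverse.mp (List.take_subset _ _ hx)
      have hy' : y ∈ as := mk_take2 hlen' y hy
      have hxny : x ≠ y := by
        intro h; subst h
        exact h5 x (hblf x hx') (hsuba x hy')
      exact hsym (h6 y (hsuba y hy') x (Or.inl (hblf x hx')) hxny)
    have hmem_inner : ∀ y ∈ bl ++ mk bls as,
        y ∈ (bl :: bls).flatten ∨ y ∈ as := by
      intro y hy
      rcases List.mem_append.mp hy with hy | hy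
      · exact Or.inl (hblf y hy)
      · rcases mem_mk.mp hy with hy | hy
        · exact Or.inl (hsubf y hy)
        · exact Or.inr hy
    have hRa : ∀ a, a ∈ (a1 :: a2 :: as) → a ∉ as →
        ∀ y ∈ bl ++ mk bls as, R a y := by
      intro a ha hanas y hy
      rcases hmem_inner y hy with hy' | hy'
      · refine h6 a ha y (Or.inl hy') ?_
        intro h; subst h
        exact h5 y hy' ha
      · refine h6 a ha y (Or.inr (hsuba y hy')) ?_
        intro h; subst h; exact hanas hy'
    have ha2nas : a2 ∉ as := (List.nodup_cons.mp ((List.nodup_cons.mp h4).2)).1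
    have hs2 : Sq R (a2 :: (bl ++ mk bls as)) := by
      refine hinner.cons1 (fun y hy => ?_)
      exact hRa a2 ha2 ha2nas y (List.take_subset _ _ hy)
    have hs1 : Sq R (a1 :: a2 :: (bl ++ mk bls as)) := by
      refine hs2.cons1 (fun y hy => ?_)
      have : y = a2 ∨ y ∈ (bl ++ mk bls as) := by
        rcases hy with _ | ⟨_, hy⟩
        · exact Or.inl rfl
        · exact Or.inr (List.take_subset _ _ hy)
      have ha1nl : a1 ∉ a2 :: as := by
        have := (List.nodup_cons.mp h4).1; simpa using this
      rcases this with rfl | hy'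
      · exact h6 a1 ha1 y (Or.inr ha2) (by intro h; subst h; exact ha1nl (by simp))
      · exact hRa a1 ha1 (fun h => ha1nl (by simp [h])) y hy'
    simpa [mk] using hs1


lemma flatten_map_singleton {α : Type} (l : List α) :
    (l.map (fun x => [x])).flatten = l := by
  induction l with
  | nil => simp
  | cons a l ih => simp [ih]

lemma exists_equiv_of_list {V : Type} [Fintype V] [DecidableEq V]
    (G : SimpleGraph V) (L : List V) (hnd : L.Nodup) (hmem : ∀ v, v ∈ L)
    (hsq : Sq G.Adj L) :
    ∃ f : Fin (Fintype.card V) ≃ V, ∀ i j : Fin (Fintype.card V),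
      (i.val + 1 = j.val ∨ i.val + 2 = j.val) → G.Adj (f i) (f j) := by
  have htf : L.toFinset = Finset.univ :=
    Finset.eq_univ_iff_forall.mpr (fun v => List.mem_toFinset.mpr (hmem v))
  have hlen : L.length = Fintype.card V := by
    rw [← List.toFinset_card_of_nodup hnd, htf, Finset.card_univ]
  have hinj : Function.Injective (fun i : Fin L.length => L.get i) :=
    List.nodup_iff_injective_get.mp hnd
  have hsurj : Function.Surjective (fun i : Fin L.length => L.get i) := by
    intro v
    obtain ⟨i, hi⟩ := List.mem_iff_get.mp (hmem v)
    exact ⟨i, hi⟩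
  refine ⟨(finCongr hlen.symm).trans (Equiv.ofBijective _ ⟨hinj, hsurj⟩), ?_⟩
  intro i j hij
  simp only [Equiv.trans_apply, Equiv.ofBijective_apply, finCongr_apply]
  have hj : (j : ℕ) < L.length := by rw [hlen]; exact j.isLt
  have := hsq.get i.val j.val hj (by omega)
  convert this using 2 <;> rfl

end Stmt15Aux

open Stmt15Aux

theorem stmt15 (V : Type) [Fintype V] [DecidableEq V] (G : SimpleGraph V)
    [DecidableRel G.Adj]
    (hOre : ∀ u v : V, u ≠ v → ¬ G.Adj u v →
      (4 * (Fintype.card V : ℝ) - 1) / 3 ≤ (G.degree u : ℝ) + G.degree v)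
    (hδ : (G.minDegree : ℝ) ≤ (Fintype.card V : ℝ) / 3 + 2) :
    ∃ f : Fin (Fintype.card V) ≃ V, ∀ i j : Fin (Fintype.card V),
      (i.val + 1 = j.val ∨ i.val + 2 = j.val) → G.Adj (f i) (f j) := by
  classical
  by_cases hcomp : ∀ u v : V, u ≠ v → G.Adj u v
  · refine ⟨(Fintype.equivFin V).symm, fun i j hij => ?_⟩
    refine hcomp _ _ (fun h => ?_)
    have : i = j := (Fintype.equivFin V).symm.injective h
    subst this; omega
  · push_neg at hcomp
    obtain ⟨u₀, v₀, hne₀, hnadj₀⟩ := hcomp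
    have : Nonempty V := ⟨u₀⟩
    set n := Fintype.card V with hn
    -- degree of a vertex in a nonadjacent pair is at most n - 2
    have hub : ∀ u v : V, u ≠ v → ¬ G.Adj u v → G.degree u + 2 ≤ n := by
      intro u v huv hnadj
      have hsub : G.neighborFinset u ⊆ (Finset.univ.erase v).erase u := by
        intro x hx
        rw [SimpleGraph.mem_neighborFinset] at hx
        refine Finset.mem_erase.mpr ⟨hx.ne', Finset.mem_erase.mpr ⟨?_, Finset.mem_univ x⟩⟩
        intro h; subst h; exact hnadj hx
      have := Finset.card_le_card hsub
      rw [Finset.card_erase_of_mem (Finset.mem_erase.mpr ⟨huv, Finset.mem_univ u⟩),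
        Finset.card_erase_of_mem (Finset.mem_univ v), Finset.card_univ] at this
      have hn2 : 2 ≤ n := Fintype.one_lt_card_iff_nontrivial.mpr ⟨u₀, v₀, hne₀⟩
      have hd : G.degree u = (G.neighborFinset u).card := rfl
      omega
    have hn6 : 6 ≤ n := by
      have h1 := hOre u₀ v₀ hne₀ hnadj₀
      have h2 := hub u₀ v₀ hne₀ hnadj₀
      have h3 := hub v₀ u₀ hne₀.symm (fun h => hnadj₀ h.symm)
      have h2' : (G.degree u₀ : ℝ) + 2 ≤ n := by exact_mod_cast h2
      have h3' : (G.degree v₀ : ℝ) + 2 ≤ n := by exact_mod_cast h3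
      have : (11 : ℝ) ≤ 2 * n := by linarith
      have : (11 : ℕ) ≤ 2 * n := by exact_mod_cast this
      omega
    obtain ⟨w, hw⟩ := G.exists_minimal_degree_vertex
    set δ := G.minDegree with hδdef
    -- w has a non-neighbor
    have hwnotuniv : ∃ u, u ≠ w ∧ ¬ G.Adj w u := by
      by_contra h
      push_neg at h
      have hdegw : G.neighborFinset w = Finset.univ.erase w := by
        ext x
        simp only [SimpleGraph.mem_neighborFinset, Finset.mem_erase, Finset.mem_univ,
          and_true]
        constructor
        · intro hx; exact hx.ne'
        · intro hx; exact h x hx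
      have h1 : G.degree w = n - 1 := by
        unfold SimpleGraph.degree
        rw [hdegw, Finset.card_erase_of_mem (Finset.mem_univ w), Finset.card_univ]
      have h2 := SimpleGraph.minDegree_le_degree G u₀
      have h3 := hub u₀ v₀ hne₀ hnadj₀
      rw [← hδdef, hw, h1] at h2
      omega
    obtain ⟨a₀, ha₀ne, ha₀nadj⟩ := hwnotuniv
    set B : Finset V := G.neighborFinset w with hBdef
    set A : Finset V := Finset.univ.filter (fun v => v ≠ w ∧ ¬ G.Adj w v) with hAdef
    have hmemA : ∀ v, v ∈ A ↔ v ≠ w ∧ ¬ G.Adj w v := by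
      intro v; simp [hAdef]
    have hmemB : ∀ v, v ∈ B ↔ G.Adj w v := by
      intro v; simp [hBdef]
    have hwB : w ∉ B := by simp [hmemB]
    have hwA : w ∉ A := by simp [hmemA]
    have hABdisj : ∀ v, v ∈ A → v ∈ B → False := by
      intro v hA hB
      exact ((hmemA v).mp hA).2 ((hmemB v).mp hB)
    have hpart : ∀ v, v = w ∨ v ∈ A ∨ v ∈ B := by
      intro v
      by_cases h1 : v = w
      · exact Or.inl h1
      · by_cases h2 : G.Adj w v
        · exact Or.inr (Or.inr ((hmemB v).mpr h2))
        · exact Or.inr (Or.inl ((hmemA v).mpr ⟨h1, h2⟩))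
    have hBcard : B.card = G.degree w := rfl
    have hdegw : G.degree w = δ := hw.symm
    have hsum : 1 + A.card + B.card = n := by
      have hA_eq : A = Finset.univ \ insert w B := by
        ext v
        simp only [hmemA, Finset.mem_sdiff, Finset.mem_univ, true_and,
          Finset.mem_insert, hmemB]
        tauto
      have hsub : insert w B ⊆ Finset.univ := Finset.subset_univ _
      have h1 : (insert w B).card = B.card + 1 := by
        rw [Finset.card_insert_of_notMem hwB]
      have h2 := Finset.card_sdiff_of_subset hsub
      have h3 := Finset.card_le_card hsub
      rw [← hA_eq] at h2
      rw [Finset.card_univ] at h2 h3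
      omega
    have hBcδ : B.card = δ := by rw [hBcard, hdegw]
    have hδle : 3 * δ ≤ n + 6 := by
      have : 3 * (δ : ℝ) ≤ n + 6 := by linarith
      exact_mod_cast this
    have hδge : n + 5 ≤ 3 * δ := by
      have h1 := hOre w a₀ (Ne.symm ha₀ne) ha₀nadj
      have h2 := hub a₀ w ha₀ne (fun h => ha₀nadj h.symm)
      have h2' : (G.degree a₀ : ℝ) + 2 ≤ n := by exact_mod_cast h2
      have hdw : (G.degree w : ℝ) = δ := by exact_mod_cast hdegw
      have : ((n : ℝ)) + 5 ≤ 3 * δ := by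
        rw [hdw] at h1
        linarith
      exact_mod_cast this
    have hδ4 : 4 ≤ δ := by omega
    -- every vertex of A is adjacent to everything except w
    have hAadj : ∀ a ∈ A, ∀ x, x ≠ a → x ≠ w → G.Adj a x := by
      intro a ha x hxa hxw
      obtain ⟨haw, hanadj⟩ := (hmemA a).mp ha
      have h1 := hOre w a (Ne.symm haw) hanadj
      have hdw : (G.degree w : ℝ) = δ := by exact_mod_cast hdegw
      rw [hdw] at h1
      have hda : 3 * n ≤ 3 * (G.degree a) + 7 := by
        have : 3 * (n : ℝ) ≤ 3 * (G.degree a : ℝ) + 7 := by linarith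
        exact_mod_cast this
      have hdan : n ≤ G.degree a + 2 := by omega
      have hsub : G.neighborFinset a ⊆ (Finset.univ.erase w).erase a := by
        intro x hx
        rw [SimpleGraph.mem_neighborFinset] at hx
        refine Finset.mem_erase.mpr ⟨hx.ne', Finset.mem_erase.mpr ⟨?_, Finset.mem_univ x⟩⟩
        intro h; subst h; exact hanadj hx.symm
      have hScard : ((Finset.univ.erase w).erase a).card + 2 = n := by
        rw [Finset.card_erase_of_mem (Finset.mem_erase.mpr ⟨haw, Finset.mem_univ a⟩),
          Finset.card_erase_of_mem (Finset.mem_univ w), Finset.card_univ]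
        omega
      have hdd : G.degree a = (G.neighborFinset a).card := rfl
      have heq := Finset.eq_of_subset_of_card_le hsub (by omega)
      have hx : x ∈ (Finset.univ.erase w).erase a :=
        Finset.mem_erase.mpr ⟨hxa, Finset.mem_erase.mpr ⟨hxw, Finset.mem_univ x⟩⟩
      rw [← heq, SimpleGraph.mem_neighborFinset] at hx
      exact hx
    have hBadjA : ∀ b ∈ B, ∀ a ∈ A, G.Adj b a := by
      intro b hb a ha
      refine (hAadj a ha b ?_ ?_).symm
      · intro h; subst h; exact hABdisj b ha hb
      · intro h; subst h; exact hwB hb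
    -- degree formula for vertices of B
    have hdeg_formula : ∀ b ∈ B, G.degree b = 1 + A.card + (B ∩ G.neighborFinset b).card := by
      intro b hb
      have hbw : b ≠ w := fun h => hwB (h ▸ hb)
      have hset : G.neighborFinset b = insert w (A ∪ (B ∩ G.neighborFinset b)) := by
        ext x
        simp only [SimpleGraph.mem_neighborFinset, Finset.mem_insert, Finset.mem_union,
          Finset.mem_inter]
        constructor
        · intro hx
          rcases hpart x with h1 | h1 | h1
          · exact Or.inl h1
          · exact Or.inr (Or.inl h1)
          · exact Or.inr (Or.inr ⟨h1, hx⟩)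
        · intro hx
          rcases hx with rfl | hx | ⟨_, hx⟩
          · exact ((hmemB b).mp hb).symm
          · exact (hBadjA b hb x hx)
          · exact hx
      have hwnotin : w ∉ A ∪ (B ∩ G.neighborFinset b) := by
        intro h
        rcases Finset.mem_union.mp h with h | h
        · exact hwA h
        · exact hwB (Finset.mem_inter.mp h).1
      have hdisj : Disjoint A (B ∩ G.neighborFinset b) := by
        rw [Finset.disjoint_left]
        intro x hx hx'
        exact hABdisj x hx (Finset.mem_inter.mp hx').1
      have : G.degree b = (insert w (A ∪ (B ∩ G.neighborFinset b))).card := by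
        rw [← hset]; rfl
      rw [this, Finset.card_insert_of_notMem hwnotin, Finset.card_union_of_disjoint hdisj]
      omega
    -- nonadjacent pairs within B have within-B degree sum at least 3
    have hdegB : ∀ b b' : V, b ∈ B → b' ∈ B → b ≠ b' → ¬ G.Adj b b' →
        3 ≤ (B ∩ G.neighborFinset b).card + (B ∩ G.neighborFinset b').card := by
      intro b b' hb hb' hne hnadj
      have h1 := hOre b b' hne hnadj
      have h2 := hdeg_formula b hb
      have h3 := hdeg_formula b' hb'
      have hAc : (A.card : ℝ) = n - 1 - δ := by
        have : (1 : ℝ) + A.card + B.card = n := by exact_mod_cast hsum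
        have hb : (B.card : ℝ) = δ := by exact_mod_cast hBcδ
        linarith
      have h2' : (G.degree b : ℝ) = 1 + A.card + (B ∩ G.neighborFinset b).card := by
        exact_mod_cast h2
      have h3' : (G.degree b' : ℝ) = 1 + A.card + (B ∩ G.neighborFinset b').card := by
        exact_mod_cast h3
      have hδge' : (n : ℝ) + 5 ≤ 3 * δ := by exact_mod_cast hδge
      have : (9 : ℝ) ≤ 3 * ((B ∩ G.neighborFinset b).card + (B ∩ G.neighborFinset b').card) := by
        rw [h2', h3', hAc] at h1
        linarith
      have : (9 : ℕ) ≤ 3 * ((B ∩ G.neighborFinset b).card + (B ∩ G.neighborFinset b').card) := by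
        exact_mod_cast this
      omega
    have hsymm : Symmetric G.Adj := fun _ _ h => h.symm
    by_cases hP4 : ∃ b1 b2 b3 b4 : V, b1 ∈ B ∧ b2 ∈ B ∧ b3 ∈ B ∧ b4 ∈ B ∧
        b1 ≠ b2 ∧ b1 ≠ b3 ∧ b1 ≠ b4 ∧ b2 ≠ b3 ∧ b2 ≠ b4 ∧ b3 ≠ b4 ∧
        G.Adj b1 b2 ∧ G.Adj b2 b3 ∧ G.Adj b3 b4
    · obtain ⟨b1, b2, b3, b4, hb1, hb2, hb3, hb4, h12, h13, h14, h23, h24, h34,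
        e12, e23, e34⟩ := hP4
      set B' : Finset V := (((B.erase b1).erase b2).erase b3).erase b4 with hB'def
      have hB'mem : ∀ x, x ∈ B' ↔ x ∈ B ∧ x ≠ b1 ∧ x ≠ b2 ∧ x ≠ b3 ∧ x ≠ b4 := by
        intro x
        simp only [hB'def, Finset.mem_erase]
        tauto
      have hB'sub : B' ⊆ B := fun x hx => ((hB'mem x).mp hx).1
      have hB'card : B'.card + 4 = B.card := by
        have m1 : b2 ∈ B.erase b1 := Finset.mem_erase.mpr ⟨Ne.symm h12, hb2⟩
        have m2 : b3 ∈ (B.erase b1).erase b2 :=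
          Finset.mem_erase.mpr ⟨Ne.symm h23, Finset.mem_erase.mpr ⟨Ne.symm h13, hb3⟩⟩
        have m3 : b4 ∈ ((B.erase b1).erase b2).erase b3 :=
          Finset.mem_erase.mpr ⟨Ne.symm h34, Finset.mem_erase.mpr ⟨Ne.symm h24,
            Finset.mem_erase.mpr ⟨Ne.symm h14, hb4⟩⟩⟩
        have c1 := Finset.card_erase_add_one hb1
        have c2 := Finset.card_erase_add_one m1
        have c3 := Finset.card_erase_add_one m2
        have c4 := Finset.card_erase_add_one m3
        rw [hB'def]
        omega
      set as : List V := A.toList with hasdef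
      set bls : List (List V) := B'.toList.map (fun x => [x]) with hblsdef
      have hfl : bls.flatten = B'.toList := flatten_map_singleton _
      have hbudget : 2 * bls.length ≤ as.length := by
        have h1 : bls.length = B'.card := by
          rw [hblsdef, List.length_map, Finset.length_toList]
        have h2 : as.length = A.card := Finset.length_toList A
        omega
      have hasA : ∀ a ∈ as, a ∈ A := fun a ha => Finset.mem_toList.mp ha
      have hflatB : ∀ x ∈ bls.flatten, x ∈ B := by
        intro x hx
        rw [hfl] at hx
        exact hB'sub (Finset.mem_toList.mp hx)
      have hSqM : Sq G.Adj (mk bls as) := by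
        refine mk_sq hsymm bls as hbudget ?_ (Finset.nodup_toList A) ?_ ?_
        · intro bl hbl
          obtain ⟨x, _, rfl⟩ := List.mem_map.mp hbl
          exact Sq.single x
        · intro b hb hbas
          exact hABdisj b (hasA b hbas) (hflatB b hb)
        · intro a ha b hb hba
          refine (hAadj a (hasA a ha) b hba ?_)
          rcases hb with hb | hb
          · intro h; subst h; exact hwB (hflatB b hb)
          · intro h; subst h; exact hwA (hasA b hb)
      have hadjwB : ∀ b ∈ B, G.Adj w b := fun b hb => (hmemB b).mp hb
      have hSqP : Sq G.Adj [b1, b2, w, b3, b4] := by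
        refine Sq.cons e12 (hadjwB b1 hb1).symm ?_
        refine Sq.cons (hadjwB b2 hb2).symm e23 ?_
        exact Sq.cons (hadjwB b3 hb3) (hadjwB b4 hb4) (Sq.pair e34)
      have hBneA : ∀ x ∈ B, ∀ y ∈ A, x ≠ y := by
        intro x hx y hy h; subst h; exact hABdisj x hy hx
      have hSqL : Sq G.Adj ([b1, b2, w, b3, b4] ++ mk bls as) := by
        refine hSqP.append hSqM ?_
        intro x hx y hy
        have hy' : y ∈ A := hasA y (mk_take2 hbudget y hy)
        have hx' : x = b4 ∨ x = b3 := by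
          simp only [List.reverse_cons, List.reverse_nil, List.nil_append,
            List.cons_append, List.take] at hx
          simpa using hx
        have hxB : x ∈ B := by rcases hx' with rfl | rfl; exact hb4; exact hb3
        refine (hAadj y hy' x (hBneA x hxB y hy') ?_).symm
        intro h; subst h; exact hwB hxB
      have hmemL : ∀ v, v ∈ ([b1, b2, w, b3, b4] ++ mk bls as) := by
        intro v
        rw [List.mem_append]
        rcases hpart v with rfl | hv | hv
        · left; simp
        · right; exact mem_mk.mpr (Or.inr (Finset.mem_toList.mpr hv))
        · by_cases h1 : v = b1; · left; simp [h1]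
          by_cases h2 : v = b2; · left; simp [h2]
          by_cases h3 : v = b3; · left; simp [h3]
          by_cases h4 : v = b4; · left; simp [h4]
          right
          refine mem_mk.mpr (Or.inl ?_)
          rw [hfl]
          exact Finset.mem_toList.mpr ((hB'mem v).mpr ⟨hv, h1, h2, h3, h4⟩)
      have hndL : ([b1, b2, w, b3, b4] ++ mk bls as).Nodup := by
        rw [List.nodup_append]
        refine ⟨?_, ?_, ?_⟩
        · have hb1w : b1 ≠ w := fun h => hwB (h ▸ hb1)
          have hb2w : b2 ≠ w := fun h => hwB (h ▸ hb2)
          have hb3w : b3 ≠ w := fun h => hwB (h ▸ hb3)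
          have hb4w : b4 ≠ w := fun h => hwB (h ▸ hb4)
          simp [h12, h13, h14, h23, h24, h34, hb1w, hb2w, hb3w, hb4w,
            Ne.symm hb3w, Ne.symm hb4w]
        · refine ((mk_perm bls as).nodup_iff).mpr ?_
          rw [List.nodup_append, hfl]
          refine ⟨Finset.nodup_toList _, Finset.nodup_toList _, ?_⟩
          intro x hx y hx' hxy
          rw [← hxy] at hx'
          exact hABdisj x (Finset.mem_toList.mp hx') (hB'sub (Finset.mem_toList.mp hx))
        · intro x hx y hx' hxy
          rw [← hxy] at hx'
          rcases mem_mk.mp hx' with hm | hm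
          · have hxB' : x ∈ B' := by rw [hfl] at hm; exact Finset.mem_toList.mp hm
            have := (hB'mem x).mp hxB'
            simp only [List.mem_cons, List.not_mem_nil] at hx
            rcases hx with rfl | rfl | rfl | rfl | rfl | h
            · exact this.2.1 rfl
            · exact this.2.2.1 rfl
            · exact hwB (hB'sub hxB')
            · exact this.2.2.2.1 rfl
            · exact this.2.2.2.2 rfl
            · exact h
          · have hxA : x ∈ A := hasA x hm
            simp only [List.mem_cons, List.not_mem_nil] at hx
            rcases hx with rfl | rfl | rfl | rfl | rfl | h
            · exact hABdisj x hxA hb1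
            · exact hABdisj x hxA hb2
            · exact hwA hxA
            · exact hABdisj x hxA hb3
            · exact hABdisj x hxA hb4
            · exact h
      exact exists_equiv_of_list G _ hndL hmemL hSqL
    · -- no-P4 case: B decomposes into cliques of size 2 or 3
      set cls : V → Finset V := fun b => B.filter (fun x => x = b ∨ G.Adj b x) with hclsdef
      have hclsmem : ∀ b x, x ∈ cls b ↔ x ∈ B ∧ (x = b ∨ G.Adj b x) := by
        intro b x; simp [hclsdef]
      have hclsself : ∀ b ∈ B, b ∈ cls b := by
        intro b hb; exact (hclsmem b b).mpr ⟨hb, Or.inl rfl⟩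
      have hclssub : ∀ b, cls b ⊆ B := by
        intro b x hx; exact ((hclsmem b x).mp hx).1
      have hnoP4 : ∀ p1 p2 p3 p4 : V, p1 ∈ B → p2 ∈ B → p3 ∈ B → p4 ∈ B →
          p1 ≠ p2 → p1 ≠ p3 → p1 ≠ p4 → p2 ≠ p3 → p2 ≠ p4 → p3 ≠ p4 →
          G.Adj p1 p2 → G.Adj p2 p3 → G.Adj p3 p4 → False := by
        intro p1 p2 p3 p4 m1 m2 m3 m4 d1 d2 d3 d4 d5 d6 a1 a2 a3
        exact hP4 ⟨p1, p2, p3, p4, m1, m2, m3, m4, d1, d2, d3, d4, d5, d6, a1, a2, a3⟩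
      have htrans : ∀ x y z : V, x ∈ B → y ∈ B → z ∈ B →
          G.Adj x y → G.Adj y z → x ≠ z → G.Adj x z := by
        intro x y z hx hy hz hxy hyz hxz
        by_contra hnadj
        have h3 := hdegB x z hx hz hxz hnadj
        by_cases hcx : 2 ≤ (B ∩ G.neighborFinset x).card
        · obtain ⟨d, hd, hdy⟩ := Finset.exists_mem_ne
            (s := B ∩ G.neighborFinset x) (by omega) y
          obtain ⟨hdB, hdadj⟩ := Finset.mem_inter.mp hd
          rw [SimpleGraph.mem_neighborFinset] at hdadj
          have hdz : d ≠ z := fun h => hnadj (h ▸ hdadj)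
          exact hnoP4 d x y z hdB hx hy hz hdadj.ne' hdy hdz hxy.ne hxz hyz.ne
            hdadj.symm hxy hyz
        · have hcz : 2 ≤ (B ∩ G.neighborFinset z).card := by omega
          obtain ⟨d, hd, hdy⟩ := Finset.exists_mem_ne
            (s := B ∩ G.neighborFinset z) (by omega) y
          obtain ⟨hdB, hdadj⟩ := Finset.mem_inter.mp hd
          rw [SimpleGraph.mem_neighborFinset] at hdadj
          have hdx : d ≠ x := fun h => hnadj (h ▸ hdadj).symm
          exact hnoP4 x y z d hx hy hz hdB hxy.ne hxz (Ne.symm hdx) hyz.ne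
            (Ne.symm hdy) hdadj.ne hxy hyz hdadj
      have hclq : ∀ b ∈ B, ∀ x ∈ cls b, ∀ y ∈ cls b, x ≠ y → G.Adj x y := by
        intro b hb x hx y hy hxy
        obtain ⟨hxB, hx'⟩ := (hclsmem b x).mp hx
        obtain ⟨hyB, hy'⟩ := (hclsmem b y).mp hy
        rcases hx' with rfl | hx' <;> rcases hy' with rfl | hy'
        · exact absurd rfl hxy
        · exact hy'
        · exact hx'.symm
        · exact htrans x b y hxB hb hyB hx'.symm hy' hxy
      have hcls_eq : ∀ b ∈ B, ∀ x ∈ cls b, cls x = cls b := by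
        intro b hb x hx
        obtain ⟨hxB, hbx'⟩ := (hclsmem b x).mp hx
        ext t
        simp only [hclsmem]
        constructor
        · rintro ⟨htB, ht⟩
          refine ⟨htB, ?_⟩
          rcases hbx' with rfl | hbx
          · exact ht
          · rcases ht with rfl | hxt
            · exact Or.inr hbx
            · by_cases htb : t = b
              · exact Or.inl htb
              · exact Or.inr (htrans b x t hb hxB htB hbx hxt (Ne.symm htb))
        · rintro ⟨htB, ht⟩
          refine ⟨htB, ?_⟩
          rcases hbx' with rfl | hbx
          · exact ht
          · rcases ht with rfl | hbt
            · exact Or.inr hbx.symm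
            · by_cases htx : t = x
              · exact Or.inl htx
              · exact Or.inr (htrans x b t hxB hb htB hbx.symm hbt (Ne.symm htx))
      have hcls3 : ∀ b ∈ B, (cls b).card ≤ 3 := by
        intro b hb
        by_contra hcard
        push_neg at hcard
        have hc0 := Finset.card_erase_add_one (hclsself b hb)
        obtain ⟨x2, hx2⟩ := Finset.card_pos.mp
          (by omega : 0 < ((cls b).erase b).card)
        have hc1 := Finset.card_erase_add_one hx2
        obtain ⟨x3, hx3⟩ := Finset.card_pos.mp
          (by omega : 0 < (((cls b).erase b).erase x2).card)
        have hc2 := Finset.card_erase_add_one hx3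
        obtain ⟨x4, hx4⟩ := Finset.card_pos.mp
          (by omega : 0 < ((((cls b).erase b).erase x2).erase x3).card)
        -- memberships
        have hx4s2 : x4 ∈ ((cls b).erase b).erase x2 := Finset.mem_of_mem_erase hx4
        have hx4s1 : x4 ∈ (cls b).erase b := Finset.mem_of_mem_erase hx4s2
        have hx3s1 : x3 ∈ (cls b).erase b := Finset.mem_of_mem_erase hx3
        have hx2c : x2 ∈ cls b := Finset.mem_of_mem_erase hx2
        have hx3c : x3 ∈ cls b := Finset.mem_of_mem_erase hx3s1
        have hx4c : x4 ∈ cls b := Finset.mem_of_mem_erase hx4s1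
        have hbc : b ∈ cls b := hclsself b hb
        have d12 : b ≠ x2 := Ne.symm (Finset.ne_of_mem_erase hx2)
        have d13 : b ≠ x3 := Ne.symm (Finset.ne_of_mem_erase hx3s1)
        have d14 : b ≠ x4 := Ne.symm (Finset.ne_of_mem_erase hx4s1)
        have d23 : x2 ≠ x3 := Ne.symm (Finset.ne_of_mem_erase hx3)
        have d24 : x2 ≠ x4 := Ne.symm (Finset.ne_of_mem_erase hx4s2)
        have d34 : x3 ≠ x4 := Ne.symm (Finset.ne_of_mem_erase hx4)
        exact hnoP4 b x2 x3 x4 hb (hclssub b hx2c) (hclssub b hx3c) (hclssub b hx4c)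
          d12 d13 d14 d23 d24 d34
          (hclq b hb b hbc x2 hx2c d12) (hclq b hb x2 hx2c x3 hx3c d23)
          (hclq b hb x3 hx3c x4 hx4c d34)
      have hdegB_eq : ∀ b ∈ B, B ∩ G.neighborFinset b = (cls b).erase b := by
        intro b hb
        ext x
        simp only [Finset.mem_inter, SimpleGraph.mem_neighborFinset, Finset.mem_erase,
          hclsmem]
        constructor
        · rintro ⟨hxB, hadj⟩
          exact ⟨hadj.ne', hxB, Or.inr hadj⟩
        · rintro ⟨hxb, hxB, h⟩
          rcases h with rfl | h
          · exact absurd rfl hxb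
          · exact ⟨hxB, h⟩
      have hcls2 : ∀ b ∈ B, 2 ≤ (cls b).card := by
        intro b hb
        by_contra hcard
        push_neg at hcard
        have hsingle : cls b = {b} := by
          refine Finset.eq_singleton_iff_unique_mem.mpr ⟨hclsself b hb, ?_⟩
          intro x hx
          exact Finset.card_le_one.mp (by omega) x hx b (hclsself b hb)
        have hdeg0 : (B ∩ G.neighborFinset b).card = 0 := by
          rw [hdegB_eq b hb, hsingle]
          simp
        obtain ⟨b', hb'B, hb'ne⟩ := Finset.exists_mem_ne
          (by omega : 1 < B.card) b
        have hnadj : ¬ G.Adj b b' := by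
          intro h
          have : b' ∈ B ∩ G.neighborFinset b :=
            Finset.mem_inter.mpr ⟨hb'B, (SimpleGraph.mem_neighborFinset G b b').mpr h⟩
          have := Finset.card_pos.mpr ⟨b', this⟩
          omega
        have h3 := hdegB b b' hb hb'B (Ne.symm hb'ne) hnadj
        have h4 : (B ∩ G.neighborFinset b').card + 1 ≤ (cls b').card := by
          rw [hdegB_eq b' hb'B]
          have := Finset.card_erase_add_one (hclsself b' hb'B)
          omega
        have := hcls3 b' hb'B
        omega
      set C : Finset (Finset V) := B.image cls with hCdef
      have hCrep : ∀ c ∈ C, ∃ b ∈ B, cls b = c := by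
        intro c hc
        obtain ⟨b, hb, hbc⟩ := Finset.mem_image.mp hc
        exact ⟨b, hb, hbc⟩
      have hdisjC : ∀ c ∈ C, ∀ c' ∈ C, c ≠ c' → Disjoint c c' := by
        intro c hc c' hc' hne
        obtain ⟨u, hu, rfl⟩ := hCrep c hc
        obtain ⟨u', hu', rfl⟩ := hCrep c' hc'
        rw [Finset.disjoint_left]
        intro t ht ht'
        have h1 := hcls_eq u hu t ht
        have h2 := hcls_eq u' hu' t ht'
        exact hne (h1 ▸ h2 ▸ rfl)
      have hBbiUnion : B = C.biUnion id := by
        ext v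
        simp only [Finset.mem_biUnion, id]
        constructor
        · intro hv
          exact ⟨cls v, Finset.mem_image_of_mem cls hv, hclsself v hv⟩
        · rintro ⟨c, hc, hvmem⟩
          obtain ⟨u, _, rfl⟩ := hCrep c hc
          exact hclssub u hvmem
      have hsumC : ∑ c ∈ C, c.card = B.card := by
        rw [hBbiUnion]
        exact (Finset.card_biUnion hdisjC).symm
      set k := C.card with hkdef
      have hk2 : 2 ≤ k := by
        obtain ⟨b₀, hb₀⟩ := Finset.card_pos.mp (by omega : 0 < B.card)
        have hsd : 0 < (B \ cls b₀).card := by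
          have h1 := Finset.card_sdiff_of_subset (hclssub b₀)
          have h2 := hcls3 b₀ hb₀
          omega
        obtain ⟨b', hb'⟩ := Finset.card_pos.mp hsd
        obtain ⟨hb'B, hb'n⟩ := Finset.mem_sdiff.mp hb'
        have hne : cls b' ≠ cls b₀ := by
          intro h
          exact hb'n (h ▸ hclsself b' hb'B)
        exact Finset.one_lt_card.mpr ⟨cls b₀, Finset.mem_image_of_mem cls hb₀,
          cls b', Finset.mem_image_of_mem cls hb'B, Ne.symm hne⟩
      have hone2 : ∀ c ∈ C, ∀ c' ∈ C, c ≠ c' → c.card = 2 → c'.card = 2 → False := by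
        intro c hc c' hc' hne hcc hcc'
        obtain ⟨u, hu, rfl⟩ := hCrep c hc
        obtain ⟨u', hu', rfl⟩ := hCrep c' hc'
        have hdisj := hdisjC _ hc _ hc' hne
        have huu' : u ≠ u' := by
          intro h
          exact (Finset.disjoint_left.mp hdisj) (hclsself u hu) (h ▸ hclsself u' hu')
        have hnadj : ¬ G.Adj u u' := by
          intro h
          have hm : u' ∈ cls u := (hclsmem u u').mpr ⟨hu', Or.inr h⟩
          exact (Finset.disjoint_left.mp hdisj) hm (hclsself u' hu')
        have h3 := hdegB u u' hu hu' huu' hnadj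
        have e1 : (B ∩ G.neighborFinset u).card + 1 = (cls u).card := by
          rw [hdegB_eq u hu]
          exact Finset.card_erase_add_one (hclsself u hu)
        have e2 : (B ∩ G.neighborFinset u').card + 1 = (cls u').card := by
          rw [hdegB_eq u' hu']
          exact Finset.card_erase_add_one (hclsself u' hu')
        omega
      have hk3 : 3 * k ≤ δ + 1 := by
        have hS2le : (C.filter (fun c => c.card = 2)).card ≤ 1 := by
          refine Finset.card_le_one.mpr ?_
          intro c hc c' hc'
          obtain ⟨hcC, hc2⟩ := Finset.mem_filter.mp hc
          obtain ⟨hc'C, hc'2⟩ := Finset.mem_filter.mp hc'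
          by_contra hne
          exact hone2 c hcC c' hc'C hne hc2 hc'2
        have hsplit := Finset.sum_filter_add_sum_filter_not C (fun c => c.card = 2)
          (fun c => c.card)
        have hS2sum : ∑ c ∈ C.filter (fun c => c.card = 2), c.card =
            2 * (C.filter (fun c => c.card = 2)).card := by
          rw [Finset.sum_congr rfl (fun c hc => (Finset.mem_filter.mp hc).2),
            Finset.sum_const, smul_eq_mul, mul_comm]
        have hS3all : ∀ c ∈ C.filter (fun c => ¬ c.card = 2), c.card = 3 := by
          intro c hc
          obtain ⟨hcC, hc2⟩ := Finset.mem_filter.mp hc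
          obtain ⟨u, hu, rfl⟩ := hCrep c hcC
          have := hcls2 u hu
          have := hcls3 u hu
          omega
        have hS3sum : ∑ c ∈ C.filter (fun c => ¬ c.card = 2), c.card =
            3 * (C.filter (fun c => ¬ c.card = 2)).card := by
          rw [Finset.sum_congr rfl hS3all, Finset.sum_const, smul_eq_mul, mul_comm]
        have hcards := Finset.card_filter_add_card_filter_not
          (s := C) (p := fun c => c.card = 2)
        omega
      have hAbudget : 2 * (k - 1) ≤ A.card := by omega
      obtain ⟨b₀, hb₀⟩ := Finset.card_pos.mp (by omega : 0 < B.card)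
      set c1 := cls b₀ with hc1def
      have hc1C : c1 ∈ C := Finset.mem_image_of_mem cls hb₀
      set rest := (C.erase c1).toList with hrestdef
      set bls : List (List V) := rest.map Finset.toList with hblsdef
      set as : List V := A.toList with hasdef
      have hrestlen : rest.length + 1 = k := by
        rw [hrestdef, Finset.length_toList]
        exact Finset.card_erase_add_one hc1C
      have hbudget : 2 * bls.length ≤ as.length := by
        have h1 : bls.length = rest.length := by rw [hblsdef, List.length_map]
        have h2 : as.length = A.card := by rw [hasdef]; exact Finset.length_toList A
        omega
      have hblC : ∀ bl ∈ bls, ∃ c, c ∈ C ∧ c ≠ c1 ∧ bl = c.toList := by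
        intro bl hbl
        obtain ⟨c, hc, rfl⟩ := List.mem_map.mp hbl
        have hc' := Finset.mem_toList.mp (by rw [hrestdef] at hc; exact hc)
        exact ⟨c, Finset.mem_of_mem_erase hc', Finset.ne_of_mem_erase hc', rfl⟩
      have hflatB : ∀ x ∈ bls.flatten, ∃ c, c ∈ C ∧ c ≠ c1 ∧ x ∈ c := by
        intro x hx
        obtain ⟨bl, hbl, hxbl⟩ := List.mem_flatten.mp hx
        obtain ⟨c, hcC, hcne, rfl⟩ := hblC bl hbl
        exact ⟨c, hcC, hcne, Finset.mem_toList.mp hxbl⟩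
      have hCB : ∀ c ∈ C, ∀ x ∈ c, x ∈ B := by
        intro c hc x hx
        obtain ⟨u, _, rfl⟩ := hCrep c hc
        exact hclssub u hx
      have hflatB' : ∀ x ∈ bls.flatten, x ∈ B := by
        intro x hx
        obtain ⟨c, hcC, _, hxc⟩ := hflatB x hx
        exact hCB c hcC x hxc
      have hasA : ∀ a ∈ as, a ∈ A := fun a ha => Finset.mem_toList.mp ha
      have hpairwise_cls : ∀ c ∈ C, c.toList.Pairwise G.Adj := by
        intro c hc
        obtain ⟨u, hu, rfl⟩ := hCrep c hc
        refine List.Pairwise.imp_of_mem ?_ (Finset.nodup_toList (cls u))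
        intro x y hx hy hxy
        exact hclq u hu x (Finset.mem_toList.mp hx) y (Finset.mem_toList.mp hy) hxy
      have hSqM : Sq G.Adj (mk bls as) := by
        refine mk_sq hsymm bls as hbudget ?_ (Finset.nodup_toList A) ?_ ?_
        · intro bl hbl
          obtain ⟨c, hcC, _, rfl⟩ := hblC bl hbl
          exact sq_of_pairwise (hpairwise_cls c hcC)
        · intro b hb hbas
          exact hABdisj b (hasA b hbas) (hflatB' b hb)
        · intro a ha b hb hba
          refine hAadj a (hasA a ha) b hba ?_
          rcases hb with hb | hb
          · intro h; subst h; exact hwB (hflatB' b hb)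
          · intro h; subst h; exact hwA (hasA b hb)
      have hc1len : 2 ≤ c1.toList.length := by
        rw [Finset.length_toList]
        exact hcls2 b₀ hb₀
      obtain ⟨x, y, t, hxyt⟩ : ∃ x y t, c1.toList = x :: y :: t := by
        match hl : c1.toList, hc1len with
        | x :: y :: t, _ => exact ⟨x, y, t, rfl⟩
      have hSqc1 : Sq G.Adj c1.toList := sq_of_pairwise (hpairwise_cls c1 hc1C)
      have hc1B : ∀ z ∈ c1.toList, z ∈ B :=
        fun z hz => hCB c1 hc1C z (Finset.mem_toList.mp hz)
      have hSqc1M : Sq G.Adj (c1.toList ++ mk bls as) := by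
        refine hSqc1.append hSqM ?_
        intro x' hx' y' hy'
        have hx'B : x' ∈ B := hc1B x' (List.mem_reverse.mp (List.take_subset _ _ hx'))
        have hy'A : y' ∈ A := hasA y' (mk_take2 hbudget y' hy')
        refine (hAadj y' hy'A x' ?_ ?_).symm
        · intro h; subst h; exact hABdisj x' hy'A hx'B
        · intro h; subst h; exact hwB hx'B
      have hSqL : Sq G.Adj (w :: (c1.toList ++ mk bls as)) := by
        refine hSqc1M.cons1 ?_
        intro z hz
        rw [hxyt] at hz
        simp only [List.cons_append, List.take, List.mem_cons, List.not_mem_nil,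
          or_false] at hz
        have hzc1 : z ∈ c1.toList := by
          rw [hxyt]
          rcases hz with rfl | rfl
          · simp
          · simp
        exact (hmemB z).mp (hc1B z hzc1)
      have hmemL : ∀ v, v ∈ (w :: (c1.toList ++ mk bls as)) := by
        intro v
        rcases hpart v with rfl | hv | hv
        · simp
        · simp only [List.mem_cons, List.mem_append]
          exact Or.inr (Or.inr (mem_mk.mpr (Or.inr (Finset.mem_toList.mpr hv))))
        · simp only [List.mem_cons, List.mem_append]
          by_cases hvc1 : cls v = c1
          · exact Or.inr (Or.inl (Finset.mem_toList.mpr (hvc1 ▸ hclsself v hv)))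
          · refine Or.inr (Or.inr (mem_mk.mpr (Or.inl ?_)))
            refine List.mem_flatten.mpr ⟨(cls v).toList, ?_, Finset.mem_toList.mpr (hclsself v hv)⟩
            rw [hblsdef]
            refine List.mem_map.mpr ⟨cls v, ?_, rfl⟩
            rw [hrestdef]
            refine Finset.mem_toList.mpr (Finset.mem_erase.mpr ⟨hvc1, Finset.mem_image_of_mem cls hv⟩)
      have hMnodup : (mk bls as).Nodup := by
        refine ((mk_perm bls as).nodup_iff).mpr ?_
        rw [List.nodup_append]
        refine ⟨?_, Finset.nodup_toList _, ?_⟩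
        · rw [List.nodup_flatten]
          constructor
          · intro bl hbl
            obtain ⟨c, _, _, rfl⟩ := hblC bl hbl
            exact Finset.nodup_toList c
          · rw [hblsdef]
            rw [List.pairwise_map]
            have hrestnd : rest.Nodup := by rw [hrestdef]; exact Finset.nodup_toList _
            refine List.Pairwise.imp_of_mem ?_ hrestnd
            intro c c' hc hc' hne
            have hcC : c ∈ C := Finset.mem_of_mem_erase
              (Finset.mem_toList.mp (by rw [hrestdef] at hc; exact hc))
            have hc'C : c' ∈ C := Finset.mem_of_mem_erase
              (Finset.mem_toList.mp (by rw [hrestdef] at hc'; exact hc'))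
            have hd := hdisjC c hcC c' hc'C hne
            intro z hz hz'
            exact (Finset.disjoint_left.mp hd) (Finset.mem_toList.mp hz)
              (Finset.mem_toList.mp hz')
        · intro z hz y hz' hzy
          rw [← hzy] at hz'
          exact hABdisj z (hasA z hz') (hflatB' z hz)
      have hndL : (w :: (c1.toList ++ mk bls as)).Nodup := by
        rw [List.nodup_cons]
        constructor
        · intro hw'
          rcases List.mem_append.mp hw' with h | h
          · exact hwB (hc1B w h)
          · rcases mem_mk.mp h with h | h
            · exact hwB (hflatB' w h)
            · exact hwA (hasA w h)
        · rw [List.nodup_append]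
          refine ⟨Finset.nodup_toList _, hMnodup, ?_⟩
          intro z hz y hz' hzy
          rw [← hzy] at hz'
          have hzc1 : z ∈ c1 := Finset.mem_toList.mp hz
          rcases mem_mk.mp hz' with h | h
          · obtain ⟨c, hcC, hcne, hzc⟩ := hflatB z h
            exact (Finset.disjoint_left.mp (hdisjC c1 hc1C c hcC (Ne.symm hcne))) hzc1 hzc
          · exact hABdisj z (hasA z h) (hc1B z hz)
      exact exists_equiv_of_list G _ hndL hmemL hSqL
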